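/- Let G be a group that is nilpotent of class at most 3 (i.e. every triple commutator ⁅⁅x,y⁆,z⁆ lies in the center Z(G)). Then for all x, y, z ∈ G the loop commutator of the associated gyrogroup satisfies °⁅°⁅x,y⁆, z⁆ = ⁅⁅x,y⁆,z⁆⁹ and °⁅x, °⁅y,z⁆⁆ = ⁅x,⁅y,z⁆⁆⁹. Consequently, the loop commutator operation is associative (°⁅°⁅x,y⁆,z⁆ = °⁅x,°⁅y,z⁆⁆ for all x,y,z) if and only if ⁅⁅x,y⁆,z⁆⁹ = ⁅x,⁅y,z⁆⁆⁹ for all x,y,z ∈ G. -/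

import Mathlib

set_option maxRecDepth 8000

/-- The gyrogroup operation associated with a group: `x ∘ y = y⁻¹ * x * y²`. -/
def gyrOp {G : Type*} [Group G] (x y : G) : G := y⁻¹ * x * y ^ 2

/-- The loop commutator of the associated gyrogroup:
`°⁅x,y⁆ = (y∘x)·(x∘y)·(y∘x)⁻²`. -/
def loopComm {G : Type*} [Group G] (x y : G) : G :=
  gyrOp y x * gyrOp x y * (gyrOp y x ^ 2)⁻¹

open scoped commutatorElement

section Aux

variable {G : Type*} [Group G]

/-- If `⁅a,b⁆` commutes with everything, then `loopComm a b = ⁅a,b⁆ ^ 3`. -/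
theorem word_lemma (a b : G)
    (hd : ∀ w : G, ⁅a, b⁆ * w = w * ⁅a, b⁆) : loopComm a b = ⁅a, b⁆ ^ 3 := by
  set d := ⁅a, b⁆ with hdef
  have hd' : ∀ w : G, d⁻¹ * w = w * d⁻¹ := fun w => by
    calc d⁻¹ * w = d⁻¹ * (w * d) * d⁻¹ := by group
    _ = d⁻¹ * (d * w) * d⁻¹ := by rw [hd w]
    _ = w * d⁻¹ := by group
  have k : a * b = d * (b * a) := by rw [hdef]; group
  -- commuting rules pushing d (and d⁻¹) to the left past a, a⁻¹, b, b⁻¹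
  have ca : ∀ w : G, a * (d * w) = d * (a * w) := fun w => by
    rw [← mul_assoc, ← hd a, mul_assoc]
  have ca' : ∀ w : G, a⁻¹ * (d * w) = d * (a⁻¹ * w) := fun w => by
    rw [← mul_assoc, ← hd a⁻¹, mul_assoc]
  have cb : ∀ w : G, b * (d * w) = d * (b * w) := fun w => by
    rw [← mul_assoc, ← hd b, mul_assoc]
  have cb' : ∀ w : G, b⁻¹ * (d * w) = d * (b⁻¹ * w) := fun w => by
    rw [← mul_assoc, ← hd b⁻¹, mul_assoc]
  have da : ∀ w : G, a * (d⁻¹ * w) = d⁻¹ * (a * w) := fun w => by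
    rw [← mul_assoc, ← hd' a, mul_assoc]
  have da' : ∀ w : G, a⁻¹ * (d⁻¹ * w) = d⁻¹ * (a⁻¹ * w) := fun w => by
    rw [← mul_assoc, ← hd' a⁻¹, mul_assoc]
  have db : ∀ w : G, b * (d⁻¹ * w) = d⁻¹ * (b * w) := fun w => by
    rw [← mul_assoc, ← hd' b, mul_assoc]
  have db' : ∀ w : G, b⁻¹ * (d⁻¹ * w) = d⁻¹ * (b⁻¹ * w) := fun w => by
    rw [← mul_assoc, ← hd' b⁻¹, mul_assoc]
  have cae : a * d = d * a := (hd a).symm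
  have cae' : a⁻¹ * d = d * a⁻¹ := (hd a⁻¹).symm
  have cbe : b * d = d * b := (hd b).symm
  have cbe' : b⁻¹ * d = d * b⁻¹ := (hd b⁻¹).symm
  have dae : a * d⁻¹ = d⁻¹ * a := (hd' a).symm
  have dae' : a⁻¹ * d⁻¹ = d⁻¹ * a⁻¹ := (hd' a⁻¹).symm
  have dbe : b * d⁻¹ = d⁻¹ * b := (hd' b).symm
  have dbe' : b⁻¹ * d⁻¹ = d⁻¹ * b⁻¹ := (hd' b⁻¹).symm
  -- swap rules pushing b's to the right past a's
  have q1 : b * a = a * (b * d⁻¹) := by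
    rw [show b * a = d⁻¹ * (a * b) from by rw [k]; group, hd', mul_assoc]
  have q1' : ∀ w : G, b * (a * w) = a * (b * (d⁻¹ * w)) := fun w => by
    rw [← mul_assoc, q1]; simp only [mul_assoc]
  have q2 : b * a⁻¹ = a⁻¹ * (b * d) := by
    have h2 : a * b * a⁻¹ = b * d := by rw [k, ← hd b]; group
    calc b * a⁻¹ = a⁻¹ * (a * b * a⁻¹) := by group
    _ = a⁻¹ * (b * d) := by rw [h2]
  have q2' : ∀ w : G, b * (a⁻¹ * w) = a⁻¹ * (b * (d * w)) := fun w => by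
    rw [← mul_assoc, q2]; simp only [mul_assoc]
  have q3 : b⁻¹ * a = a * (b⁻¹ * d) := by
    calc b⁻¹ * a = b⁻¹ * (a * b) * b⁻¹ := by group
    _ = b⁻¹ * (d * (b * a)) * b⁻¹ := by rw [k]
    _ = b⁻¹ * (b * a) * (d * b⁻¹) := by rw [hd (b * a)]; group
    _ = b⁻¹ * (b * a) * (b⁻¹ * d) := by rw [hd b⁻¹]
    _ = a * (b⁻¹ * d) := by group
  have q3' : ∀ w : G, b⁻¹ * (a * w) = a * (b⁻¹ * (d * w)) := fun w => by
    rw [← mul_assoc, q3]; simp only [mul_assoc]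
  have q4 : b⁻¹ * a⁻¹ = a⁻¹ * (b⁻¹ * d⁻¹) := by
    calc b⁻¹ * a⁻¹ = (a * b)⁻¹ := by group
    _ = (d * (b * a))⁻¹ := by rw [k]
    _ = a⁻¹ * (b⁻¹ * d⁻¹) := by group
  have q4' : ∀ w : G, b⁻¹ * (a⁻¹ * w) = a⁻¹ * (b⁻¹ * (d⁻¹ * w)) := fun w => by
    rw [← mul_assoc, q4]; simp only [mul_assoc]
  show gyrOp b a * gyrOp a b * (gyrOp b a ^ 2)⁻¹ = d ^ 3
  simp only [gyrOp, pow_succ, pow_zero, one_mul, mul_one, mul_inv_rev, inv_inv, mul_assoc]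
  simp only [q1', q1, q2', q2, q3', q3, q4', q4,
    ca, ca', cb, cb', da, da', db, db', cae, cae', cbe, cbe', dae, dae', dbe, dbe',
    mul_assoc, mul_inv_cancel_left, inv_mul_cancel_left, mul_inv_cancel, inv_mul_cancel,
    one_mul, mul_one]

/-- Central elements factor out of the `loopComm`-shaped word. -/
theorem central_step (P Q t : G) (ht : ∀ w : G, t * w = w * t) :
    (P * t) * (Q * t) * (((P * t)) ^ 2)⁻¹ = P * Q * (P ^ 2)⁻¹ := by
  have h2 : (P * t) ^ 2 = (P * P) * (t * t) := by
    rw [pow_two, show P * t * (P * t) = P * (t * P) * t from by group, ht P]; group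
  calc (P * t) * (Q * t) * ((P * t) ^ 2)⁻¹
      = (P * t) * (Q * t) * ((P * P) * (t * t))⁻¹ := by rw [h2]
    _ = P * (t * Q) * (t * (t * t)⁻¹) * (P * P)⁻¹ := by group
    _ = P * (Q * t) * (t * (t * t)⁻¹) * (P * P)⁻¹ := by rw [ht Q]
    _ = P * Q * (P ^ 2)⁻¹ := by rw [pow_two]; group

theorem gyr_central_left (v z t : G) (ht : ∀ w : G, t * w = w * t) :
    gyrOp (v * t) z = gyrOp v z * t := by
  calc gyrOp (v * t) z = (z⁻¹ * v) * (t * z ^ 2) := by rw [gyrOp]; group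
    _ = (z⁻¹ * v) * (z ^ 2 * t) := by rw [ht]
    _ = gyrOp v z * t := by rw [gyrOp]; group

theorem gyr_central_right (v z t : G) (ht : ∀ w : G, t * w = w * t) :
    gyrOp z (v * t) = gyrOp z v * t := by
  have ht' : ∀ w : G, t⁻¹ * w = w * t⁻¹ := fun w => by
    calc t⁻¹ * w = t⁻¹ * (w * t) * t⁻¹ := by group
    _ = t⁻¹ * (t * w) * t⁻¹ := by rw [ht w]
    _ = w * t⁻¹ := by group
  have h2 : (v * t) ^ 2 = (v * v) * (t * t) := by
    rw [pow_two, show v * t * (v * t) = v * (t * v) * t from by group, ht v]; group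
  calc gyrOp z (v * t) = (v * t)⁻¹ * z * ((v * v) * (t * t)) := by rw [gyrOp, h2]
    _ = t⁻¹ * (v⁻¹ * z * (v * v)) * (t * t) := by group
    _ = (v⁻¹ * z * (v * v)) * t⁻¹ * (t * t) := by rw [ht' (v⁻¹ * z * (v * v))]
    _ = gyrOp z v * t := by rw [gyrOp, pow_two]; group

/-- A central factor in the first argument does not change the loop commutator. -/
theorem lc_central_left (v z t : G) (ht : ∀ w : G, t * w = w * t) :
    loopComm (v * t) z = loopComm v z := by
  rw [loopComm, loopComm, gyr_central_left v z t ht, gyr_central_right v z t ht,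
    central_step _ _ _ ht]

/-- A central factor in the second argument does not change the loop commutator. -/
theorem lc_central_right (x v t : G) (ht : ∀ w : G, t * w = w * t) :
    loopComm x (v * t) = loopComm x v := by
  rw [loopComm, loopComm, gyr_central_left v x t ht, gyr_central_right v x t ht,
    central_step _ _ _ ht]

/-- If `⁅c,z⁆` is central then `⁅c^3, z⁆ = ⁅c,z⁆^3`. -/
theorem comm_pow3 (c z : G) (he : ∀ w : G, ⁅c, z⁆ * w = w * ⁅c, z⁆) :
    ⁅c ^ 3, z⁆ = ⁅c, z⁆ ^ 3 := by
  set e := ⁅c, z⁆ with hedef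
  have r : c * z * c⁻¹ = e * z := by rw [hedef]; group
  have rgen : ∀ w : G, c * (e * w) * c⁻¹ = e * (c * w * c⁻¹) := fun w => by
    calc c * (e * w) * c⁻¹ = (c * e) * (w * c⁻¹) := by group
    _ = (e * c) * (w * c⁻¹) := by rw [← he c]
    _ = e * (c * w * c⁻¹) := by group
  calc ⁅c ^ 3, z⁆ = c * (c * (c * z * c⁻¹) * c⁻¹) * c⁻¹ * z⁻¹ := by
        rw [commutatorElement_def, pow_succ, pow_two]; group
    _ = c * (c * (e * z) * c⁻¹) * c⁻¹ * z⁻¹ := by rw [r]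
    _ = c * (e * (c * z * c⁻¹)) * c⁻¹ * z⁻¹ := by rw [rgen z]
    _ = c * (e * (e * z)) * c⁻¹ * z⁻¹ := by rw [r]
    _ = e * (c * (e * z) * c⁻¹) * z⁻¹ := by rw [rgen (e * z)]
    _ = e * (e * (c * z * c⁻¹)) * z⁻¹ := by rw [rgen z]
    _ = e * (e * (e * z)) * z⁻¹ := by rw [r]
    _ = e ^ 3 := by rw [pow_succ, pow_two]; group

end Aux

theorem loopComm_assoc_iff {G : Type*} [Group G]
    (h3 : ∀ x y z : G, ⁅⁅x, y⁆, z⁆ ∈ Subgroup.center G) :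
    (∀ x y z : G, loopComm (loopComm x y) z = ⁅⁅x, y⁆, z⁆ ^ 9 ∧
      loopComm x (loopComm y z) = ⁅x, ⁅y, z⁆⁆ ^ 9) ∧
    ((∀ x y z : G, loopComm (loopComm x y) z = loopComm x (loopComm y z)) ↔
      (∀ x y z : G, ⁅⁅x, y⁆, z⁆ ^ 9 = ⁅x, ⁅y, z⁆⁆ ^ 9)) := by
  -- the quotient by the center has all commutators central
  set π := QuotientGroup.mk' (Subgroup.center G) with hπ
  have hQc : ∀ a b w : G ⧸ Subgroup.center G, ⁅a, b⁆ * w = w * ⁅a, b⁆ := by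
    intro a b w
    obtain ⟨x, rfl⟩ := QuotientGroup.mk'_surjective (Subgroup.center G) a
    obtain ⟨y, rfl⟩ := QuotientGroup.mk'_surjective (Subgroup.center G) b
    obtain ⟨z, rfl⟩ := QuotientGroup.mk'_surjective (Subgroup.center G) w
    refine commutatorElement_eq_one_iff_mul_comm.mp ?_
    rw [← map_commutatorElement, ← map_commutatorElement]
    exact (QuotientGroup.eq_one_iff _).mpr (h3 x y z)
  -- decomposition of the loop commutator
  have hlc : ∀ x y : G, ∃ t : G, (∀ w : G, t * w = w * t) ∧
      loopComm x y = ⁅x, y⁆ ^ 3 * t := by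
    intro x y
    refine ⟨(⁅x, y⁆ ^ 3)⁻¹ * loopComm x y, ?_, by group⟩
    have hmem : (⁅x, y⁆ ^ 3)⁻¹ * loopComm x y ∈ Subgroup.center G := by
      have hmap : π (loopComm x y) = loopComm (π x) (π y) := by
        simp only [loopComm, gyrOp, map_mul, map_inv, map_pow]
      have key : π ((⁅x, y⁆ ^ 3)⁻¹ * loopComm x y) = 1 := by
        rw [map_mul, map_inv, map_pow, map_commutatorElement, hmap,
          word_lemma (π x) (π y) (hQc _ _)]
        group
      exact (QuotientGroup.eq_one_iff _).mp key
    exact fun w => (Subgroup.mem_center_iff.mp hmem w).symm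
  have I1 : ∀ x y z : G, loopComm (loopComm x y) z = ⁅⁅x, y⁆, z⁆ ^ 9 := by
    intro x y z
    obtain ⟨t, ht, hxy⟩ := hlc x y
    have e3 : ⁅⁅x, y⁆ ^ 3, z⁆ = ⁅⁅x, y⁆, z⁆ ^ 3 :=
      comm_pow3 _ _ (fun w => (Subgroup.mem_center_iff.mp (h3 x y z) w).symm)
    have hcen : ∀ w : G, ⁅⁅x, y⁆ ^ 3, z⁆ * w = w * ⁅⁅x, y⁆ ^ 3, z⁆ := by
      intro w
      rw [e3]
      exact (Subgroup.mem_center_iff.mp (pow_mem (h3 x y z) 3) w).symm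
    rw [hxy, lc_central_left _ _ _ ht, word_lemma _ _ hcen, e3, ← pow_mul]
  have I2 : ∀ x y z : G, loopComm x (loopComm y z) = ⁅x, ⁅y, z⁆⁆ ^ 9 := by
    intro x y z
    obtain ⟨t, ht, hyz⟩ := hlc y z
    have huxc : ⁅⁅y, z⁆, x⁆ ∈ Subgroup.center G := h3 y z x
    have e3 : ⁅x, ⁅y, z⁆ ^ 3⁆ = ⁅x, ⁅y, z⁆⁆ ^ 3 := by
      have e : ⁅⁅y, z⁆ ^ 3, x⁆ = ⁅⁅y, z⁆, x⁆ ^ 3 :=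
        comm_pow3 _ _ (fun w => (Subgroup.mem_center_iff.mp huxc w).symm)
      calc ⁅x, ⁅y, z⁆ ^ 3⁆ = ⁅⁅y, z⁆ ^ 3, x⁆⁻¹ := (commutatorElement_inv _ _).symm
      _ = (⁅⁅y, z⁆, x⁆ ^ 3)⁻¹ := by rw [e]
      _ = (⁅⁅y, z⁆, x⁆⁻¹) ^ 3 := by rw [inv_pow]
      _ = ⁅x, ⁅y, z⁆⁆ ^ 3 := by rw [commutatorElement_inv]
    have hcen : ∀ w : G, ⁅x, ⁅y, z⁆ ^ 3⁆ * w = w * ⁅x, ⁅y, z⁆ ^ 3⁆ := by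
      intro w
      rw [e3]
      have hxuc : ⁅x, ⁅y, z⁆⁆ ∈ Subgroup.center G := by
        rw [← commutatorElement_inv]
        exact inv_mem huxc
      exact (Subgroup.mem_center_iff.mp (pow_mem hxuc 3) w).symm
    rw [hyz, lc_central_right _ _ _ ht, word_lemma _ _ hcen, e3, ← pow_mul]
  refine ⟨fun x y z => ⟨I1 x y z, I2 x y z⟩, ?_, ?_⟩
  · intro h x y z
    rw [← I1 x y z, ← I2 x y z]
    exact h x y z
  · intro h x y z
    rw [I1 x y z, I2 x y z]
    exact h x y z
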